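/- If D is a countable subset of the unit sphere S² = {x ∈ ℝ³ : ‖x‖ = 1}, then S² and S² \ D are equidecomposable with respect to the natural action of the special orthogonal group SO(3) on ℝ³. -/

import Mathlib

open scoped Pointwise

/-- Two subsets `A` and `B` of a `G`-set `X` are `G`-equidecomposable if there are
finitely many pairwise disjoint pieces `P i` whose union is `A` and group elements
`g i` such that the translates `g i • P i` are pairwise disjoint with union `B`. -/
def Equidecomposable (G : Type*) [Group G] {X : Type*} [MulAction G X]
    (A B : Set X) : Prop :=
  ∃ (n : ℕ) (P : Fin n → Set X) (g : Fin n → G),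
    (∀ i j, i ≠ j → Disjoint (P i) (P j)) ∧
    (⋃ i, P i) = A ∧
    (∀ i j, i ≠ j → Disjoint (g i • P i) (g j • P j)) ∧
    (⋃ i, g i • P i) = B

/-- The group structure on `SO(3)` (the special orthogonal group of real `3 × 3` matrices). -/
noncomputable instance : Group ↥(Matrix.specialOrthogonalGroup (Fin 3) ℝ) :=
  { (inferInstance : Monoid ↥(Matrix.specialOrthogonalGroup (Fin 3) ℝ)) with
    inv := fun A => ⟨star (A : Matrix (Fin 3) (Fin 3) ℝ), by
      have hA := Matrix.mem_specialOrthogonalGroup_iff.mp A.2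
      refine Matrix.mem_specialOrthogonalGroup_iff.mpr ⟨Unitary.star_mem hA.1, ?_⟩
      have : (A : Matrix (Fin 3) (Fin 3) ℝ).det = 1 := hA.2
      simp [Matrix.star_eq_conjTranspose, Matrix.det_conjTranspose, this]⟩
    inv_mul_cancel := fun A => Subtype.ext (Matrix.mem_specialOrthogonalGroup_iff.mp A.2).1.1 }

/-- The natural action of `SO(3)` on `ℝ³`, by matrix-vector multiplication. -/
noncomputable instance : MulAction ↥(Matrix.specialOrthogonalGroup (Fin 3) ℝ)
    (EuclideanSpace ℝ (Fin 3)) where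
  smul g x := WithLp.toLp 2 ((g : Matrix (Fin 3) (Fin 3) ℝ).mulVec x)
  one_smul x := by
    show WithLp.toLp 2 ((((1 : ↥(Matrix.specialOrthogonalGroup (Fin 3) ℝ)) :
      Matrix (Fin 3) (Fin 3) ℝ)).mulVec x) = x
    simp
  mul_smul g h x := by
    show WithLp.toLp 2 (((g * h : ↥(Matrix.specialOrthogonalGroup (Fin 3) ℝ)) :
        Matrix (Fin 3) (Fin 3) ℝ).mulVec x)
      = WithLp.toLp 2 ((g : Matrix (Fin 3) (Fin 3) ℝ).mulVec
        (WithLp.ofLp (WithLp.toLp 2 ((h : Matrix (Fin 3) (Fin 3) ℝ).mulVec x))))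
    rw [Submonoid.coe_mul, ← Matrix.mulVec_mulVec, WithLp.ofLp_toLp]

namespace SphereAux

open Matrix Real Set

noncomputable def Rz (θ : ℝ) : Matrix (Fin 3) (Fin 3) ℝ :=
  !![Real.cos θ, -Real.sin θ, 0; Real.sin θ, Real.cos θ, 0; 0, 0, 1]

noncomputable def Rx (θ : ℝ) : Matrix (Fin 3) (Fin 3) ℝ :=
  !![1, 0, 0; 0, Real.cos θ, -Real.sin θ; 0, Real.sin θ, Real.cos θ]

lemma Rz_mem (θ : ℝ) : Rz θ ∈ Matrix.specialOrthogonalGroup (Fin 3) ℝ := by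
  refine Matrix.mem_specialOrthogonalGroup_iff.mpr
    ⟨(Matrix.mem_orthogonalGroup_iff' (Fin 3) ℝ).mpr ?_, ?_⟩
  · ext i j
    fin_cases i <;> fin_cases j <;>
      simp [Rz, Matrix.mul_apply, Matrix.star_eq_conjTranspose, Fin.sum_univ_succ,
        Real.sin_sq_add_cos_sq, Real.cos_sq_add_sin_sq] <;> ring_nf <;>
      simp [Real.sin_sq_add_cos_sq, Real.cos_sq_add_sin_sq]
  · simp [Rz, Matrix.det_fin_three, Real.sin_sq_add_cos_sq, Real.cos_sq_add_sin_sq]; ring_nf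
    simp [Real.sin_sq_add_cos_sq, Real.cos_sq_add_sin_sq]

lemma Rx_mem (θ : ℝ) : Rx θ ∈ Matrix.specialOrthogonalGroup (Fin 3) ℝ := by
  refine Matrix.mem_specialOrthogonalGroup_iff.mpr
    ⟨(Matrix.mem_orthogonalGroup_iff' (Fin 3) ℝ).mpr ?_, ?_⟩
  · ext i j
    fin_cases i <;> fin_cases j <;>
      simp [Rx, Matrix.mul_apply, Matrix.star_eq_conjTranspose, Fin.sum_univ_succ,
        Real.sin_sq_add_cos_sq, Real.cos_sq_add_sin_sq] <;> ring_nf <;>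
      simp [Real.sin_sq_add_cos_sq, Real.cos_sq_add_sin_sq]
  · simp [Rx, Matrix.det_fin_three, Real.sin_sq_add_cos_sq, Real.cos_sq_add_sin_sq]; ring_nf
    simp [Real.sin_sq_add_cos_sq, Real.cos_sq_add_sin_sq]

lemma Rz_mul (α β : ℝ) : Rz α * Rz β = Rz (α + β) := by
  ext i j
  fin_cases i <;> fin_cases j <;>
    simp [Rz, Matrix.mul_apply, Fin.sum_univ_succ, Real.cos_add, Real.sin_add] <;> ring

lemma Rz_pow (θ : ℝ) (n : ℕ) : (Rz θ) ^ n = Rz (n * θ) := by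
  induction n with
  | zero =>
    rw [pow_zero, Nat.cast_zero, zero_mul]
    ext i j
    fin_cases i <;> fin_cases j <;>
      simp [Rz, Matrix.one_apply, Matrix.vecHead, Matrix.vecTail]
  | succ n ih =>
    rw [pow_succ, ih, Rz_mul]
    congr 1
    push_cast
    ring

lemma Rz_mulVec (θ : ℝ) (x : Fin 3 → ℝ) :
    (Rz θ).mulVec x = ![Real.cos θ * x 0 - Real.sin θ * x 1,
      Real.sin θ * x 0 + Real.cos θ * x 1, x 2] := by
  ext i
  fin_cases i <;> simp [Rz, Matrix.mulVec, dotProduct, Fin.sum_univ_succ] <;> ring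

lemma Rx_mulVec (θ : ℝ) (x : Fin 3 → ℝ) :
    (Rx θ).mulVec x = ![x 0, Real.cos θ * x 1 - Real.sin θ * x 2,
      Real.sin θ * x 1 + Real.cos θ * x 2] := by
  ext i
  fin_cases i <;> simp [Rx, Matrix.mulVec, dotProduct, Fin.sum_univ_succ] <;> ring

lemma countable_exp_eq (u : ℂ) :
    {α : ℝ | Complex.exp (α * Complex.I) = u}.Countable := by
  rcases Set.eq_empty_or_nonempty {α : ℝ | Complex.exp (α * Complex.I) = u} with h | ⟨α₀, hα₀⟩
  · simp [h]
  · have : {α : ℝ | Complex.exp (α * Complex.I) = u} ⊆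
        Set.range (fun n : ℤ => α₀ + n * (2 * Real.pi)) := by
      intro α hα
      have h1 : Complex.exp (α * Complex.I) = Complex.exp (α₀ * Complex.I) := by
        rw [hα, hα₀]
      obtain ⟨n, hn⟩ := Complex.exp_eq_exp_iff_exists_int.mp h1
      refine ⟨n, ?_⟩
      have h2 : ((α₀ + n * (2 * Real.pi) : ℝ) : ℂ) * Complex.I = (α : ℂ) * Complex.I := by
        rw [hn]; push_cast; ring
      have h3 : ((α₀ + n * (2 * Real.pi) : ℝ) : ℂ) = (α : ℂ) :=
        mul_right_cancel₀ Complex.I_ne_zero h2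
      exact Complex.ofReal_inj.mp h3
    exact (Set.countable_range _).mono this

def toE (v : Fin 3 → ℝ) : EuclideanSpace ℝ (Fin 3) := WithLp.toLp 2 v

@[simp] lemma toE_apply (v : Fin 3 → ℝ) (i : Fin 3) : toE v i = v i := rfl

lemma norm_eq_one_iff (x : EuclideanSpace ℝ (Fin 3)) :
    ‖x‖ = 1 ↔ x 0 ^ 2 + x 1 ^ 2 + x 2 ^ 2 = 1 := by
  rw [EuclideanSpace.norm_eq, show (1 : ℝ) = Real.sqrt 1 by simp,
    Real.sqrt_inj (by positivity) zero_le_one, Fin.sum_univ_three]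
  simp [Real.norm_eq_abs, sq_abs]

lemma norm_mulVec {A : Matrix (Fin 3) (Fin 3) ℝ}
    (hA : A ∈ Matrix.orthogonalGroup (Fin 3) ℝ) (x : EuclideanSpace ℝ (Fin 3)) :
    ‖toE (A.mulVec x)‖ = ‖x‖ := by
  have h1 : star A * A = 1 := (Matrix.mem_orthogonalGroup_iff' (Fin 3) ℝ).mp hA
  have key : A.mulVec x ⬝ᵥ A.mulVec x = x ⬝ᵥ x := by
    rw [dotProduct_mulVec]
    have : A.vecMul (A.mulVec x) = x := by
      rw [show A = Aᵀᵀ by simp, Matrix.vecMul_transpose, Matrix.mulVec_mulVec]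
      rw [show Aᵀ * Aᵀᵀ = star A * A by simp [Matrix.star_eq_conjTranspose], h1]
      simp
    rw [this]
  rw [EuclideanSpace.norm_eq (toE (A.mulVec x)), EuclideanSpace.norm_eq x]
  congr 1
  simpa [dotProduct, Real.norm_eq_abs, sq_abs, pow_two] using key

lemma countable_Rz_eq (x y : Fin 3 → ℝ) (hx : ¬(x 0 = 0 ∧ x 1 = 0)) :
    {α : ℝ | (Rz α).mulVec x = y}.Countable := by
  have hz : (Complex.mk (x 0) (x 1)) ≠ 0 := by
    intro h
    exact hx ⟨congrArg Complex.re h, congrArg Complex.im h⟩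
  refine (countable_exp_eq (Complex.mk (y 0) (y 1) / Complex.mk (x 0) (x 1))).mono ?_
  intro α hα
  have h0 : Real.cos α * x 0 - Real.sin α * x 1 = y 0 := by
    have := congrFun hα 0
    rw [Rz_mulVec] at this
    simpa using this
  have h1 : Real.sin α * x 0 + Real.cos α * x 1 = y 1 := by
    have := congrFun hα 1
    rw [Rz_mulVec] at this
    simpa using this
  show Complex.exp (α * Complex.I) = _
  rw [eq_div_iff hz, Complex.exp_mul_I]
  apply Complex.ext <;>
    simp [Complex.add_re, Complex.mul_re, Complex.mul_im, Complex.cos_ofReal_re,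
      Complex.sin_ofReal_re] <;> linarith [h0, h1]

lemma exists_not_mem_of_countable {s : Set ℝ} (hs : s.Countable) : ∃ x : ℝ, x ∉ s := by
  by_contra h
  push_neg at h
  have : s = Set.univ := Set.eq_univ_of_forall h
  rw [this, Set.countable_univ_iff] at hs
  exact (not_countable (α := ℝ)) hs

end SphereAux

set_option synthInstance.maxHeartbeats 1000000
set_option maxHeartbeats 1000000

open SphereAux Matrix in
/-- If `D` is a countable subset of the unit sphere `S²` in `ℝ³`, then `S²` and `S² \\ D`
are `SO(3)`-equidecomposable. -/
theorem sphere_equidecomposable_sdiff_countable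
    (D : Set (EuclideanSpace ℝ (Fin 3))) (hD : D.Countable)
    (hDS : D ⊆ {x : EuclideanSpace ℝ (Fin 3) | ‖x‖ = 1}) :
    Equidecomposable ↥(Matrix.specialOrthogonalGroup (Fin 3) ℝ)
      {x : EuclideanSpace ℝ (Fin 3) | ‖x‖ = 1}
      ({x : EuclideanSpace ℝ (Fin 3) | ‖x‖ = 1} \ D) := by
  classical
  -- Step 1: choose an axis direction avoiding `D`
  have hBadΦ : (⋃ d ∈ D, ({φ : ℝ | Complex.exp (φ * Complex.I) = Complex.mk (d 2) (-(d 1))}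
      ∪ {φ : ℝ | Complex.exp (φ * Complex.I) = Complex.mk (-(d 2)) (d 1)})).Countable :=
    hD.biUnion fun d _ => (countable_exp_eq _).union (countable_exp_eq _)
  obtain ⟨φ, hφ⟩ := exists_not_mem_of_countable hBadΦ
  set U := Rx φ with hUdef
  have hU : U ∈ Matrix.specialOrthogonalGroup (Fin 3) ℝ := Rx_mem φ
  have hUo : U ∈ Matrix.orthogonalGroup (Fin 3) ℝ :=
    (Matrix.mem_specialOrthogonalGroup_iff.mp hU).1
  have hsUU : star U * U = 1 := (Matrix.mem_orthogonalGroup_iff' (Fin 3) ℝ).mp hUo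
  have hUsU : U * star U = 1 := (Matrix.mem_orthogonalGroup_iff (Fin 3) ℝ).mp hUo
  have hUso : star U ∈ Matrix.orthogonalGroup (Fin 3) ℝ := Unitary.star_mem hUo
  have hv1 : toE ![0, -Real.sin φ, Real.cos φ] ∉ D := by
    intro hmem
    apply hφ
    refine Set.mem_biUnion hmem (Or.inl ?_)
    show Complex.exp _ = _
    rw [Complex.exp_mul_I]
    apply Complex.ext <;> simp [Complex.cos_ofReal_re, Complex.sin_ofReal_re]
  have hv2 : toE ![0, Real.sin φ, -Real.cos φ] ∉ D := by
    intro hmem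
    apply hφ
    refine Set.mem_biUnion hmem (Or.inr ?_)
    show Complex.exp _ = _
    rw [Complex.exp_mul_I]
    apply Complex.ext <;> simp [Complex.cos_ofReal_re, Complex.sin_ofReal_re]
  -- conjugated points
  set c : EuclideanSpace ℝ (Fin 3) → EuclideanSpace ℝ (Fin 3) :=
    fun d => toE ((star U).mulVec d) with hcdef
  have hcnorm : ∀ d, ‖c d‖ = ‖d‖ := fun d => norm_mulVec hUso d
  have hcback : ∀ d : EuclideanSpace ℝ (Fin 3), toE (U.mulVec (c d)) = d := by
    intro d
    show toE (U.mulVec ((star U).mulVec d)) = d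
    rw [Matrix.mulVec_mulVec, hUsU, Matrix.one_mulVec]
    rfl
  have hax : ∀ d ∈ D, ¬((c d) 0 = 0 ∧ (c d) 1 = 0) := by
    rintro d hd ⟨h0, h1⟩
    have hn : ‖c d‖ = 1 := by rw [hcnorm]; exact hDS hd
    rw [norm_eq_one_iff] at hn
    rw [h0, h1] at hn
    have h2 : c d 2 = 1 ∨ c d 2 = -1 := by
      have hz : (c d 2 - 1) * (c d 2 + 1) = 0 := by nlinarith
      rcases mul_eq_zero.mp hz with h | h
      · left; linarith
      · right; linarith
    rcases h2 with h | h
    · apply hv1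
      have hform : d = toE ![0, -Real.sin φ, Real.cos φ] := by
        rw [← hcback d]
        have : (c d : Fin 3 → ℝ) = ![0, 0, 1] := by
          funext i; fin_cases i <;> simp [h0, h1, h]
        rw [show U.mulVec (c d) = U.mulVec ![0, 0, 1] by rw [this], hUdef, Rx_mulVec]
        congr 1
        funext i; fin_cases i <;> simp
      rwa [hform] at hd
    · apply hv2
      have hform : d = toE ![0, Real.sin φ, -Real.cos φ] := by
        rw [← hcback d]
        have : (c d : Fin 3 → ℝ) = ![0, 0, -1] := by
          funext i; fin_cases i <;> simp [h0, h1, h]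
        rw [show U.mulVec (c d) = U.mulVec ![0, 0, -1] by rw [this], hUdef, Rx_mulVec]
        congr 1
        funext i; fin_cases i <;> simp
      rwa [hform] at hd
  -- Step 2: choose a rotation angle
  have hBadΘ : (⋃ n : ℕ, ⋃ d ∈ D, ⋃ e ∈ D,
      {θ : ℝ | (Rz (((n : ℝ) + 1) * θ)).mulVec (c d) = (c e : Fin 3 → ℝ)}).Countable := by
    refine Set.countable_iUnion fun n => hD.biUnion fun d hd => hD.biUnion fun e he => ?_
    have hinj : Function.Injective (fun θ : ℝ => ((n : ℝ) + 1) * θ) := by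
      intro a b hab
      simp only at hab
      have hne : ((n : ℝ) + 1) ≠ 0 := by positivity
      exact mul_left_cancel₀ hne hab
    exact (countable_Rz_eq (c d) (c e) (hax d hd)).preimage hinj
  obtain ⟨θ, hθ⟩ := exists_not_mem_of_countable hBadΘ
  -- the rotation g
  let u : ↥(Matrix.specialOrthogonalGroup (Fin 3) ℝ) := ⟨U, hU⟩
  let r : ↥(Matrix.specialOrthogonalGroup (Fin 3) ℝ) := ⟨Rz θ, Rz_mem θ⟩
  let g : ↥(Matrix.specialOrthogonalGroup (Fin 3) ℝ) := u * r * u⁻¹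
  have hcoe : ∀ k : ℕ, ((g ^ k : ↥(Matrix.specialOrthogonalGroup (Fin 3) ℝ)) :
      Matrix (Fin 3) (Fin 3) ℝ) = U * Rz ((k : ℝ) * θ) * star U := by
    intro k
    have h1 : g ^ k = u * r ^ k * u⁻¹ := conj_pow
    have h2 : ((u⁻¹ : ↥(Matrix.specialOrthogonalGroup (Fin 3) ℝ)) :
        Matrix (Fin 3) (Fin 3) ℝ) = star U := rfl
    have h3 : ((r ^ k : ↥(Matrix.specialOrthogonalGroup (Fin 3) ℝ)) :
        Matrix (Fin 3) (Fin 3) ℝ) = Rz ((k : ℝ) * θ) := by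
      rw [show ((r ^ k : ↥(Matrix.specialOrthogonalGroup (Fin 3) ℝ)) :
        Matrix (Fin 3) (Fin 3) ℝ) = (Rz θ) ^ k from SubmonoidClass.coe_pow r k, Rz_pow]
    rw [h1]
    rw [MulMemClass.coe_mul, MulMemClass.coe_mul, h2, h3]
  have hsmul : ∀ (a : ↥(Matrix.specialOrthogonalGroup (Fin 3) ℝ))
      (x : EuclideanSpace ℝ (Fin 3)),
      a • x = toE ((a : Matrix (Fin 3) (Fin 3) ℝ).mulVec x) := fun _ _ => rfl
  have hnorm : ∀ (a : ↥(Matrix.specialOrthogonalGroup (Fin 3) ℝ))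
      (x : EuclideanSpace ℝ (Fin 3)), ‖a • x‖ = ‖x‖ := by
    intro a x
    rw [hsmul]
    exact norm_mulVec (Matrix.mem_specialOrthogonalGroup_iff.mp a.2).1 x
  -- key property: the orbit of D never returns to D
  have hkey : ∀ (k : ℕ) (x : EuclideanSpace ℝ (Fin 3)),
      x ∈ D → (g ^ (k + 1)) • x ∈ D → False := by
    intro k x hx hy
    apply hθ
    refine Set.mem_iUnion.mpr ⟨k, ?_⟩
    refine Set.mem_biUnion hx ?_
    refine Set.mem_biUnion hy ?_
    show (Rz (((k : ℝ) + 1) * θ)).mulVec (c x) = (c ((g ^ (k + 1)) • x) : Fin 3 → ℝ)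
    have hc2 : ((g ^ (k + 1) : ↥(Matrix.specialOrthogonalGroup (Fin 3) ℝ)) :
        Matrix (Fin 3) (Fin 3) ℝ) = U * Rz (((k : ℝ) + 1) * θ) * star U := by
      rw [hcoe]
      push_cast
      ring_nf
    have h1 : (c ((g ^ (k + 1)) • x) : Fin 3 → ℝ)
        = (star U).mulVec ((U * Rz (((k : ℝ) + 1) * θ) * star U).mulVec x) := by
      show (star U).mulVec (((g ^ (k + 1) : ↥(Matrix.specialOrthogonalGroup (Fin 3) ℝ)) :
        Matrix (Fin 3) (Fin 3) ℝ).mulVec x) = _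
      rw [hc2]
    rw [h1]
    show (Rz (((k : ℝ) + 1) * θ)).mulVec ((star U).mulVec x) = _
    rw [Matrix.mulVec_mulVec, Matrix.mulVec_mulVec]
    congr 1
    rw [← mul_assoc, ← mul_assoc, hsUU, one_mul]
  -- the orbit set
  set E : Set (EuclideanSpace ℝ (Fin 3)) := ⋃ k : ℕ, (g ^ k) • D with hEdef
  have hDE : D ⊆ E := by
    intro x hx
    exact Set.mem_iUnion.mpr ⟨0, by rwa [pow_zero, one_smul]⟩
  have hES : E ⊆ {x : EuclideanSpace ℝ (Fin 3) | ‖x‖ = 1} := by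
    intro x hx
    obtain ⟨k, hk⟩ := Set.mem_iUnion.mp hx
    obtain ⟨d, hd, rfl⟩ := hk
    show ‖(g ^ k) • d‖ = 1
    rw [hnorm]
    exact hDS hd
  have hgE : g • E = E \ D := by
    have h1 : g • E = ⋃ k : ℕ, (g ^ (k + 1)) • D := by
      rw [hEdef, Set.smul_set_iUnion]
      refine Set.iUnion_congr fun k => ?_
      rw [smul_smul, ← pow_succ']
    rw [h1]
    apply Set.Subset.antisymm
    · intro x hx
      obtain ⟨k, hk⟩ := Set.mem_iUnion.mp hx
      obtain ⟨d, hd, rfl⟩ := hk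
      exact ⟨Set.mem_iUnion.mpr ⟨k + 1, Set.smul_mem_smul_set hd⟩,
        fun hxD => hkey k d hd hxD⟩
    · intro x hx
      obtain ⟨hxE, hxD⟩ := hx
      obtain ⟨k, hk⟩ := Set.mem_iUnion.mp hxE
      match k, hk with
      | 0, hk => rw [pow_zero, one_smul] at hk; exact absurd hk hxD
      | (m + 1), hk => exact Set.mem_iUnion.mpr ⟨m, hk⟩
  -- assemble the equidecomposition
  refine ⟨2, ![E, {x : EuclideanSpace ℝ (Fin 3) | ‖x‖ = 1} \ E], ![g, 1], ?_, ?_, ?_, ?_⟩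
  · intro i j hij
    fin_cases i <;> fin_cases j
    · exact absurd rfl hij
    · exact disjoint_sdiff_self_right
    · exact disjoint_sdiff_self_left
    · exact absurd rfl hij
  · ext x
    simp only [Set.mem_iUnion, Fin.exists_fin_two, Matrix.cons_val_zero, Matrix.cons_val_one,
      Matrix.head_cons]
    constructor
    · rintro (h | h)
      · exact hES h
      · exact h.1
    · intro hx
      by_cases hxE : x ∈ E
      · exact Or.inl hxE
      · exact Or.inr ⟨hx, hxE⟩
  · intro i j hij
    fin_cases i <;> fin_cases j
    · exact absurd rfl hij
    · show Disjoint (g • E)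
        ((1 : ↥(Matrix.specialOrthogonalGroup (Fin 3) ℝ)) •
          ({x : EuclideanSpace ℝ (Fin 3) | ‖x‖ = 1} \ E))
      rw [hgE, one_smul, Set.disjoint_left]
      rintro x ⟨hxE, _⟩ ⟨_, hxnE⟩
      exact hxnE hxE
    · show Disjoint
        ((1 : ↥(Matrix.specialOrthogonalGroup (Fin 3) ℝ)) •
          ({x : EuclideanSpace ℝ (Fin 3) | ‖x‖ = 1} \ E)) (g • E)
      rw [hgE, one_smul, Set.disjoint_left]
      rintro x ⟨_, hxnE⟩ ⟨hxE, _⟩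
      exact hxnE hxE
    · exact absurd rfl hij
  · ext x
    simp only [Set.mem_iUnion, Fin.exists_fin_two, Matrix.cons_val_zero, Matrix.cons_val_one,
      Matrix.head_cons]
    constructor
    · rintro (h | h)
      · change x ∈ g • E at h; rw [hgE] at h
        exact ⟨hES h.1, h.2⟩
      · change x ∈ (1 : ↥(Matrix.specialOrthogonalGroup (Fin 3) ℝ)) • ({x : EuclideanSpace ℝ (Fin 3) | ‖x‖ = 1} \ E) at h; rw [one_smul] at h
        exact ⟨h.1, fun hxD => h.2 (hDE hxD)⟩
    · rintro ⟨hxS, hxD⟩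
      by_cases hxE : x ∈ E
      · left
        change x ∈ g • E; rw [hgE]
        exact ⟨hxE, hxD⟩
      · right
        change x ∈ (1 : ↥(Matrix.specialOrthogonalGroup (Fin 3) ℝ)) • ({x : EuclideanSpace ℝ (Fin 3) | ‖x‖ = 1} \ E); rw [one_smul]
        exact ⟨hxS, hxE⟩
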